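/- Consider a partitioned general linear method applied to a partitioned ODE system y' = f(y) with components y_{m}, m = 1,...,N, where each component is advanced by its own GLM (A_{m}, U_{m}, B_{m}, V_{m}) sharing the same abscissa vector c (internal consistency). If each component method has order p and stage order q ∈ {p-1, p}, and each f_{m} is Lipschitz continuous, and the input vectors satisfy y_{m,i}^{[n-1]} = Σ_{k=0}^p q_{m,i,k} hᵏ y_{m}^{(k)}(t_{n-1}) + O(h^{p+1}), then the stage values satisfy Y_{m,i} = y_{m}(t_{n-1} + c_i h) + O(h^{q+1}) and the outputs satisfy y_{m,i}^{[n]} = Σ_{k=0}^p q_{m,i,k} hᵏ y_{m}^{(k)}(t_n) + O(h^{p+1}) for all sufficiently small h. In particular no coupling order conditions between the component methods are required. -/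

import Mathlib

open Asymptotics Filter Matrix Topology Finset

variable {E : Type*} [NormedAddCommGroup E] [NormedSpace ℝ E]

/-- `F` has polynomial expansion with coefficients `a` up to order `p` at `0`. -/
def ExpandO (p : ℕ) (F : ℝ → E) (a : ℕ → E) : Prop :=
  (fun h : ℝ => F h - ∑ k ∈ Finset.range (p+1), h ^ k • a k) =O[𝓝 (0:ℝ)] fun h => h ^ (p+1)

theorem ExpandO.congr {p : ℕ} {F G : ℝ → E} {a b : ℕ → E} (h : ExpandO p F a)
    (hFG : ∀ x, F x = G x) (hab : ∀ k, k < p + 1 → a k = b k) : ExpandO p G b := by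
  unfold ExpandO at *
  refine h.congr (fun x => ?_) (fun x => rfl)
  rw [hFG]
  congr 1
  exact Finset.sum_congr rfl fun k hk => by rw [hab k (Finset.mem_range.mp hk)]

theorem ExpandO.add {p : ℕ} {F G : ℝ → E} {a b : ℕ → E} (hF : ExpandO p F a)
    (hG : ExpandO p G b) : ExpandO p (fun x => F x + G x) (fun k => a k + b k) := by
  unfold ExpandO at *
  refine (hF.add hG).congr (fun x => ?_) (fun x => rfl)
  simp [smul_add, Finset.sum_add_distrib]
  abel

theorem ExpandO.sub {p : ℕ} {F G : ℝ → E} {a b : ℕ → E} (hF : ExpandO p F a)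
    (hG : ExpandO p G b) : ExpandO p (fun x => F x - G x) (fun k => a k - b k) := by
  unfold ExpandO at *
  refine (hF.sub hG).congr (fun x => ?_) (fun x => rfl)
  simp [smul_sub, Finset.sum_sub_distrib]
  abel

theorem ExpandO.const_smul {p : ℕ} {F : ℝ → E} {a : ℕ → E} (hF : ExpandO p F a) (r : ℝ) :
    ExpandO p (fun x => r • F x) (fun k => r • a k) := by
  unfold ExpandO at *
  refine (hF.const_smul_left r).congr (fun x => ?_) (fun x => rfl)
  simp only [Pi.smul_apply]
  rw [smul_sub, Finset.smul_sum]
  congr 1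
  exact Finset.sum_congr rfl fun k _ => smul_comm _ _ _

theorem ExpandO.zero {p : ℕ} : ExpandO p (fun _ : ℝ => (0:E)) (fun _ => 0) := by
  unfold ExpandO
  exact (isBigO_zero _ _).congr (fun x => by simp) (fun x => rfl)

theorem ExpandO.sum {p : ℕ} {ι : Type*} (S : Finset ι) {F : ι → ℝ → E} {a : ι → ℕ → E}
    (h : ∀ j ∈ S, ExpandO p (F j) (a j)) :
    ExpandO p (fun x => ∑ j ∈ S, F j x) (fun k => ∑ j ∈ S, a j k) := by
  classical
  induction S using Finset.induction with
  | empty => exact ExpandO.zero.congr (fun x => by simp) (fun k _ => by simp)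
  | @insert j S' hj ih =>
      have h1 := h j (Finset.mem_insert_self _ _)
      have h2 := ih fun i hi => h i (Finset.mem_insert_of_mem hi)
      exact (h1.add h2).congr (fun x => by rw [Finset.sum_insert hj])
        (fun k _ => by rw [Finset.sum_insert hj])

theorem ExpandO.poly {p : ℕ} (a : ℕ → E) :
    ExpandO p (fun x : ℝ => ∑ k ∈ Finset.range (p+1), x ^ k • a k) a := by
  unfold ExpandO
  exact (isBigO_zero _ _).congr (fun x => (sub_self _).symm) fun x => rfl
theorem taylor_expandO : ∀ (n : ℕ) (g : ℝ → E), ContDiff ℝ (n+1 : ℕ) g → ∀ (t : ℝ),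
    ExpandO n (fun h => g (t + h)) (fun k => ((k.factorial : ℝ))⁻¹ • iteratedDeriv k g t)
  | 0, g, hg, t => by
      unfold ExpandO
      have hd : HasDerivAt g (deriv g t) t :=
        ((hg.differentiable (by norm_num)) t).hasDerivAt
      have h1 : (fun x : ℝ => g x - g t) =O[𝓝 t] fun x => x - t :=
        hd.isBigO_sub
      have ht : Tendsto (fun h : ℝ => t + h) (𝓝 0) (𝓝 t) := by
        simpa using (continuous_add_left t).tendsto (0:ℝ)
      have h2 := h1.comp_tendsto ht
      refine h2.congr (fun x => ?_) (fun x => by simp)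
      simp [iteratedDeriv_zero]
  | (n+1), g, hg, t => by
      have hg' : ContDiff ℝ (n+1 : ℕ) (deriv g) := by
        have : ContDiff ℝ ((n+1 : ℕ) + 1) g := by exact_mod_cast hg
        exact (contDiff_succ_iff_deriv.mp this).2.2
      have IH := taylor_expandO n (deriv g) hg' t
      unfold ExpandO at IH ⊢
      set w : ℕ → E := fun k => ((k.factorial : ℝ))⁻¹ • iteratedDeriv k g t with hw
      set R : ℝ → E := fun h => g (t + h) - ∑ k ∈ Finset.range (n+2), h ^ k • w k with hR
      set R' : ℝ → E := fun s => deriv g (t + s) -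
        ∑ k ∈ Finset.range (n+1), s ^ k • ((k.factorial : ℝ))⁻¹ • iteratedDeriv k (deriv g) t
        with hR'
      have hderiv : ∀ s : ℝ, HasDerivAt R (R' s) s := by
        intro s
        have d1 : HasDerivAt (fun u : ℝ => g (t + u)) (deriv g (t + s)) s := by
          have : HasDerivAt g (deriv g (t + s)) (t + s) :=
            ((hg.differentiable (by norm_num)) _).hasDerivAt
          exact this.comp_const_add t s
        have d2 : HasDerivAt (fun u : ℝ => ∑ k ∈ Finset.range (n+2), u ^ k • w k)
            (∑ k ∈ Finset.range (n+2), ((k : ℝ) * s ^ (k-1)) • w k) s := by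
          refine HasDerivAt.fun_sum fun k _ => ?_
          exact (hasDerivAt_pow k s).smul_const (w k)
        have hterm : ∀ k, (((k+1 : ℕ) : ℝ) * s ^ ((k+1)-1)) • w (k+1)
            = s ^ k • ((k.factorial : ℝ))⁻¹ • iteratedDeriv k (deriv g) t := by
          intro k
          show (((k+1 : ℕ) : ℝ) * s ^ k) • ((((k+1).factorial : ℝ))⁻¹ • iteratedDeriv (k+1) g t) = _
          have h1 : iteratedDeriv (k+1) g = iteratedDeriv k (deriv g) := iteratedDeriv_succ'
          rw [h1, smul_smul, smul_smul]
          congr 1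
          push_cast [Nat.factorial_succ]
          have hk : (k.factorial : ℝ) ≠ 0 := Nat.cast_ne_zero.mpr k.factorial_ne_zero
          field_simp
        have heq : R' s = deriv g (t + s) - ∑ k ∈ Finset.range (n+2), ((k : ℝ) * s ^ (k-1)) • w k := by
          rw [hR']
          congr 1
          rw [Finset.sum_range_succ']
          simp only [Nat.cast_zero, zero_mul, zero_smul, add_zero]
          rw [Finset.sum_congr rfl fun k _ => hterm k]
        have := d1.sub d2
        rw [hR, heq]
        exact this
      -- R 0 = 0
      have hR0 : R 0 = 0 := by
        rw [hR]
        have : (∑ k ∈ Finset.range (n+2), (0:ℝ) ^ k • w k) = w 0 := by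
          rw [Finset.sum_eq_single_of_mem 0 (by simp)]
          · simp
          · intro k _ hk
            rw [zero_pow hk, zero_smul]
        show g (t + 0) - ∑ k ∈ Finset.range (n+2), (0:ℝ) ^ k • w k = 0
        rw [this, hw]
        simp [iteratedDeriv_zero]
      -- bound from IH
      obtain ⟨C, hC⟩ := IH.bound
      obtain ⟨δ, δpos, hδ⟩ := Metric.eventually_nhds_iff.mp hC
      rw [isBigO_iff]
      refine ⟨|C|, Metric.eventually_nhds_iff.mpr ⟨δ, δpos, fun h hh => ?_⟩⟩
      have habs : |h| < δ := by simpa [Real.dist_eq] using hh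
      have key : ‖R h - R 0‖ ≤ (|C| * |h| ^ (n+1)) * ‖h - 0‖ := by
        refine Convex.norm_image_sub_le_of_norm_hasDerivWithin_le
          (fun x hx => (hderiv x).hasDerivWithinAt) (fun x hx => ?_)
          (convex_Icc (-|h|) |h|) ?_ ?_
        · obtain ⟨hx1, hx2⟩ := hx
          have hxh : |x| ≤ |h| := abs_le.mpr ⟨hx1, hx2⟩
          have hxδ : dist x 0 < δ := by
            rw [Real.dist_eq, sub_zero]
            exact lt_of_le_of_lt hxh habs
          calc ‖R' x‖ ≤ C * ‖x ^ (n+1)‖ := hδ hxδ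
            _ ≤ |C| * ‖x ^ (n+1)‖ := by
                exact mul_le_mul_of_nonneg_right (le_abs_self C) (norm_nonneg _)
            _ ≤ |C| * |h| ^ (n+1) := by
                refine mul_le_mul_of_nonneg_left ?_ (abs_nonneg C)
                rw [norm_pow, Real.norm_eq_abs]
                exact pow_le_pow_left₀ (abs_nonneg x) hxh _
        · exact ⟨neg_nonpos.mpr (abs_nonneg h), abs_nonneg h⟩
        · exact ⟨neg_abs_le h, le_abs_self h⟩
      rw [hR0, sub_zero, sub_zero] at key
      calc ‖R h‖ ≤ (|C| * |h| ^ (n+1)) * ‖h‖ := key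
        _ = |C| * ‖h ^ (n+1+1)‖ := by
            rw [Real.norm_eq_abs, Real.norm_eq_abs, abs_pow]
            ring

def shiftCoeff (j : ℕ) (a : ℕ → E) : ℕ → E := fun n => if n < j then 0 else a (n - j)

theorem ExpandO.shift_one {m : ℕ} {G : ℝ → E} {b : ℕ → E} (hG : ExpandO m G b) :
    ExpandO (m+1) (fun h => h • G h) (shiftCoeff 1 b) := by
  unfold ExpandO at *
  have key : ∀ h : ℝ, h • G h - ∑ k ∈ Finset.range (m+2), h ^ k • shiftCoeff 1 b k
      = h • (G h - ∑ k ∈ Finset.range (m+1), h ^ k • b k) := by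
    intro h
    rw [Finset.sum_range_succ']
    have h0 : (h:ℝ) ^ 0 • shiftCoeff 1 b 0 = 0 := by simp [shiftCoeff]
    have hsucc : ∀ k, h ^ (k+1) • shiftCoeff 1 b (k+1) = h • (h ^ k • b k) := by
      intro k
      rw [smul_smul, ← pow_succ']
      simp [shiftCoeff]
    rw [h0, add_zero, Finset.sum_congr rfl fun k _ => hsucc k, ← Finset.smul_sum, ← smul_sub]
  have H := (isBigO_refl (fun h : ℝ => h) (𝓝 (0:ℝ))).smul hG
  refine H.congr (fun x => (key x).symm) (fun x => ?_)
  show x • x ^ (m+1) = x ^ (m+1+1)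
  rw [smul_eq_mul, ← pow_succ']

theorem ExpandO.shift {n : ℕ} {F : ℝ → E} {a : ℕ → E} (hF : ExpandO n F a) :
    ∀ j, ExpandO (n + j) (fun h => h ^ j • F h) (shiftCoeff j a)
  | 0 => hF.congr (fun x => by rw [pow_zero, one_smul]) (fun k _ => by simp [shiftCoeff])
  | (j+1) => by
      have H := (hF.shift j).shift_one
      refine H.congr (fun x => ?_) (fun k _ => ?_)
      · rw [smul_smul, ← pow_succ']
      · cases k with
        | zero => simp [shiftCoeff]
        | succ k' => simp [shiftCoeff, Nat.succ_lt_succ_iff, Nat.succ_sub_succ]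

theorem taylor_expandO_scaled (n : ℕ) (g : ℝ → E) (hg : ContDiff ℝ (n+1 : ℕ) g) (t c : ℝ) :
    ExpandO n (fun h => g (t + c * h))
      (fun k => (c ^ k * ((k.factorial : ℝ))⁻¹) • iteratedDeriv k g t) := by
  have H := taylor_expandO n g hg t
  unfold ExpandO at *
  have ht : Tendsto (fun h : ℝ => c * h) (𝓝 0) (𝓝 0) := by
    simpa using (continuous_mul_left c).tendsto (0:ℝ)
  have H2 := H.comp_tendsto ht
  have H3 : (fun h : ℝ => (c * h) ^ (n+1)) =O[𝓝 (0:ℝ)] fun h => h ^ (n+1) := by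
    simp_rw [mul_pow]
    exact (isBigO_refl _ _).const_mul_left _
  refine (H2.trans H3).congr (fun x => ?_) (fun x => rfl)
  show g (t + c * x) - ∑ k ∈ Finset.range (n+1), (c * x) ^ k • _ = _
  congr 1
  refine Finset.sum_congr rfl fun k _ => ?_
  rw [mul_pow, smul_smul, smul_smul]
  congr 1
  ring

/-- A polynomial that is `O(z^K)` at `0` has vanishing low-order coefficients. -/
theorem poly_isBigO_coeff_zero {n K : ℕ} (a : ℕ → ℝ)
    (H : (fun z : ℝ => ∑ k ∈ Finset.range n, a k * z ^ k) =O[𝓝 (0:ℝ)] fun z => z ^ K) :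
    ∀ k, k < K → k < n → a k = 0 := by
  intro k
  induction k using Nat.strong_induction_on with
  | _ k IH =>
    intro hkK hkn
    -- split the polynomial
    set Q : ℝ → ℝ := fun z => ∑ j ∈ Finset.range (n - k), a (k + j) * z ^ j with hQ
    have hsplit : ∀ z : ℝ, (∑ j ∈ Finset.range n, a j * z ^ j) = z ^ k * Q z := by
      intro z
      have hn : n = k + (n - k) := by omega
      rw [hn, Finset.sum_range_add]
      have hz : ∀ j ∈ Finset.range k, a j * z ^ j = 0 := by
        intro j hj
        have hj' := Finset.mem_range.mp hj
        rw [IH j hj' (hj'.trans hkK) (by omega), zero_mul]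
      rw [Finset.sum_congr rfl hz, Finset.sum_const_zero, zero_add, hQ, Finset.mul_sum]
      refine Finset.sum_congr rfl fun j _ => ?_
      rw [pow_add]
      ring
    have hQ0 : Q 0 = a k := by
      show (∑ j ∈ Finset.range (n - k), a (k + j) * (0:ℝ) ^ j) = a k
      rw [Finset.sum_eq_single_of_mem 0 (by simp; omega)]
      · simp
      · intro j _ hj
        rw [zero_pow hj, mul_zero]
    have hQcont : Continuous Q := by
      rw [hQ]; fun_prop
    have h1 : Tendsto Q (𝓝[≠] (0:ℝ)) (𝓝 (a k)) := by
      rw [← hQ0]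
      exact hQcont.continuousAt.tendsto.mono_left nhdsWithin_le_nhds
    obtain ⟨C, hC⟩ := H.bound
    have h2 : Tendsto Q (𝓝[≠] (0:ℝ)) (𝓝 0) := by
      refine squeeze_zero_norm' (a := fun z => C * |z| ^ (K - k)) ?_ ?_
      · have hev : ∀ᶠ z in 𝓝[≠] (0:ℝ),
            ‖(∑ j ∈ Finset.range n, a j * z ^ j)‖ ≤ C * ‖z ^ K‖ :=
          hC.filter_mono nhdsWithin_le_nhds
        refine hev.mp (eventually_mem_nhdsWithin.mono fun z hz hb => ?_)
        have hz0 : z ≠ (0:ℝ) := hz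
        have hzk : (0:ℝ) < |z| ^ k := pow_pos (abs_pos.mpr hz0) k
        rw [hsplit z, Real.norm_eq_abs, Real.norm_eq_abs, abs_mul, abs_pow, abs_pow,
          show K = k + (K - k) by omega, pow_add] at hb
        have hb' : |Q z| * |z| ^ k ≤ (C * |z| ^ (K - k)) * |z| ^ k := by
          calc |Q z| * |z| ^ k = |z| ^ k * |Q z| := by ring
            _ ≤ C * (|z| ^ k * |z| ^ (K - k)) := hb
            _ = (C * |z| ^ (K - k)) * |z| ^ k := by ring
        exact le_of_mul_le_mul_right hb' hzk
      · have hc : Tendsto (fun z : ℝ => C * |z| ^ (K - k)) (𝓝 0) (𝓝 0) := by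
          have : Continuous fun z : ℝ => C * |z| ^ (K - k) := by fun_prop
          have h00 : C * |(0:ℝ)| ^ (K - k) = 0 := by
            rw [abs_zero, zero_pow (by omega), mul_zero]
          have := this.tendsto (0:ℝ)
          rwa [h00] at this
        exact hc.mono_left nhdsWithin_le_nhds
    exact tendsto_nhds_unique h1 h2

theorem pow_isBigO_pow_nhds_zero {K M : ℕ} (h : K ≤ M) :
    (fun z : ℝ => z ^ M) =O[𝓝 (0:ℝ)] fun z => z ^ K := by
  rw [isBigO_iff]
  refine ⟨1, Metric.eventually_nhds_iff.mpr ⟨1, one_pos, fun z hz => ?_⟩⟩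
  have hz1 : |z| ≤ 1 := le_of_lt (by simpa [Real.dist_eq] using hz)
  rw [Real.norm_eq_abs, Real.norm_eq_abs, abs_pow, abs_pow, one_mul]
  exact pow_le_pow_of_le_one (abs_nonneg z) hz1 h

theorem ExpandO.transfer {p K : ℕ} (hK : K ≤ p + 1) (a : ℕ → ℝ) (v : ℕ → E)
    {Φ : ℝ → ℝ} {F : ℝ → E}
    (h1 : ExpandO p Φ a)
    (h2 : Φ =O[𝓝 (0:ℝ)] fun z => z ^ K)
    (h3 : ExpandO p F (fun k => a k • v k)) :
    F =O[𝓝 (0:ℝ)] fun h => h ^ K := by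
  unfold ExpandO at h1 h3
  -- the scalar polynomial is O(z^K)
  have hP : (fun z : ℝ => ∑ k ∈ Finset.range (p+1), a k * z ^ k)
      =O[𝓝 (0:ℝ)] fun z => z ^ K := by
    have hsub := h2.sub (h1.trans (pow_isBigO_pow_nhds_zero hK))
    refine hsub.congr (fun z => ?_) (fun z => rfl)
    rw [sub_sub_cancel]
    exact Finset.sum_congr rfl fun k _ => by rw [smul_eq_mul, mul_comm]
  have hcoeff : ∀ k, k < K → k < p + 1 → a k = 0 := poly_isBigO_coeff_zero a hP
  -- each term of the vector polynomial is O(h^K)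
  have hterm : ∀ k ∈ Finset.range (p+1),
      (fun h : ℝ => h ^ k • (a k • v k)) =O[𝓝 (0:ℝ)] fun h => h ^ K := by
    intro k hk
    rcases lt_or_ge k K with hkK | hkK
    · have : a k = 0 := hcoeff k hkK (Finset.mem_range.mp hk)
      rw [this]
      exact (isBigO_zero _ _).congr (fun h => by simp) (fun h => rfl)
    · have h4 : (fun h : ℝ => h ^ k • (a k • v k)) =O[𝓝 (0:ℝ)] fun h => h ^ k := by
        rw [isBigO_iff]
        refine ⟨‖a k • v k‖, Filter.Eventually.of_forall fun h => ?_⟩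
        rw [norm_smul, mul_comm]
      exact h4.trans (pow_isBigO_pow_nhds_zero hkK)
  have hsum := Asymptotics.IsBigO.sum hterm
  have hrem := h3.trans (pow_isBigO_pow_nhds_zero hK)
  exact (hrem.add hsum).congr (fun h => by simp [Finset.sum_apply]) (fun h => rfl)

theorem iteratedDeriv_real_exp : ∀ n : ℕ, iteratedDeriv n Real.exp = Real.exp
  | 0 => iteratedDeriv_zero
  | (n+1) => by
      rw [iteratedDeriv_succ, iteratedDeriv_real_exp n, Real.deriv_exp]

theorem iteratedDeriv_iteratedDeriv (f : ℝ → E) (k : ℕ) :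
    ∀ n : ℕ, iteratedDeriv n (iteratedDeriv k f) = iteratedDeriv (n + k) f
  | 0 => by rw [iteratedDeriv_zero, Nat.zero_add]
  | (n+1) => by
      rw [iteratedDeriv_succ', ← iteratedDeriv_succ, iteratedDeriv_iteratedDeriv f (k+1) n,
        show n + (k+1) = n + 1 + k by omega]

theorem contDiff_iteratedDeriv {f : ℝ → E} {n k : ℕ} (hf : ContDiff ℝ (n + k : ℕ) f) :
    ContDiff ℝ (n : ℕ) (iteratedDeriv k f) := by
  rw [iteratedDeriv_eq_iterate]
  exact ContDiff.iterate_deriv' n k hf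

theorem isBigO_apply {ι : Type*} [Fintype ι] {G : Type*} [NormedAddCommGroup G]
    {α : Type*} {l : Filter α} {F : α → ι → G} {g : α → ℝ} (h : F =O[l] g) (i : ι) :
    (fun z => F z i) =O[l] g := by
  refine IsBigO.trans ?_ h
  exact IsBigO.of_bound 1 (Filter.Eventually.of_forall fun z => by
    rw [one_mul]; exact norm_le_pi_norm (F z) i)

/-- Taylor coefficients of `exp (c z)`. -/
noncomputable def eC (c : ℝ) : ℕ → ℝ := fun k => c ^ k * ((k.factorial : ℝ))⁻¹

theorem exp_expandO (n : ℕ) (c : ℝ) :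
    ExpandO n (fun z : ℝ => Real.exp (c * z)) (eC c) := by
  have := taylor_expandO_scaled n Real.exp (Real.contDiff_exp) 0 c
  refine this.congr (fun x => by rw [zero_add]) (fun k _ => ?_)
  rw [iteratedDeriv_real_exp, Real.exp_zero, eC, smul_eq_mul, mul_one]

theorem scalar_mulexp_expandO (p : ℕ) (hp : 0 < p) {ι : Type*} [Fintype ι]
    (arow : ι → ℝ) (c : ι → ℝ) :
    ExpandO p (fun z : ℝ => z * ∑ j, arow j * Real.exp (c j * z))
      (fun n => ∑ j, arow j * shiftCoeff 1 (eC (c j)) n) := by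
  have hinner : ExpandO (p-1) (fun z : ℝ => ∑ j, arow j * Real.exp (c j * z))
      (fun n => ∑ j, arow j * eC (c j) n) := by
    refine ExpandO.sum Finset.univ fun j _ => ?_
    exact ((exp_expandO (p-1) (c j)).const_smul (arow j)).congr
      (fun z => by rw [smul_eq_mul]) (fun k _ => by rw [smul_eq_mul])
  have h1 := hinner.shift_one
  rw [show p - 1 + 1 = p by omega] at h1
  refine h1.congr (fun z => by rw [smul_eq_mul]) (fun k _ => ?_)
  cases k with
  | zero => simp [shiftCoeff]
  | succ k' => simp [shiftCoeff]

theorem vec_mulderiv_expandO (p : ℕ) (hp : 0 < p) {ι : Type*} [Fintype ι]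
    (arow : ι → ℝ) (c : ι → ℝ) (g : ℝ → E) (hg : ContDiff ℝ (p : ℕ) (deriv g)) (t : ℝ) :
    ExpandO p (fun h : ℝ => ∑ j, arow j • (h • deriv g (t + c j * h)))
      (fun n => ∑ j, (arow j * shiftCoeff 1 (eC (c j)) n) • iteratedDeriv n g t) := by
  have hg' : ContDiff ℝ ((p - 1 : ℕ) + 1 : ℕ) (deriv g) := by
    rw [show p - 1 + 1 = p by omega]; exact hg
  refine ExpandO.sum Finset.univ fun j _ => ?_
  have hb := (taylor_expandO_scaled (p-1) (deriv g) hg' t (c j)).shift_one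
  rw [show p - 1 + 1 = p by omega] at hb
  refine (hb.const_smul (arow j)).congr (fun x => rfl) (fun k _ => ?_)
  cases k with
  | zero => simp [shiftCoeff]
  | succ k' =>
      show arow j • ((c j ^ k' * ((k'.factorial : ℝ))⁻¹) • iteratedDeriv k' (deriv g) t) = _
      rw [← iteratedDeriv_succ']
      simp only [shiftCoeff, Nat.succ_sub_one, if_neg (by omega : ¬ k' + 1 < 1)]
      rw [smul_smul]
      simp [eC]

theorem scalar_exppoly_expandO (p : ℕ) (qrow : ℕ → ℝ) :
    ExpandO p (fun z : ℝ => ∑ k ∈ Finset.range (p+1), qrow k • (z ^ k • Real.exp z))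
      (fun n => ∑ k ∈ Finset.range (p+1), qrow k * shiftCoeff k (eC 1) n) := by
  refine ExpandO.sum (Finset.range (p+1)) fun k hk => ?_
  have hk' : k ≤ p := by have := Finset.mem_range.mp hk; omega
  have hbase : ExpandO (p-k) (fun z : ℝ => Real.exp z) (eC 1) :=
    (exp_expandO (p-k) 1).congr (fun z => by rw [one_mul]) (fun n _ => rfl)
  have hsh := hbase.shift k
  rw [Nat.sub_add_cancel hk'] at hsh
  exact (hsh.const_smul (qrow k)).congr (fun z => rfl) (fun n _ => by rw [smul_eq_mul])

theorem vec_target_expandO (p : ℕ) (qrow : ℕ → ℝ) (g : ℝ → E)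
    (hg : ContDiff ℝ ((p+1 : ℕ) : WithTop ℕ∞) g) (t : ℝ) :
    ExpandO p (fun h : ℝ => ∑ k ∈ Finset.range (p+1), qrow k • (h ^ k • iteratedDeriv k g (t+h)))
      (fun n => ∑ k ∈ Finset.range (p+1),
        (qrow k * shiftCoeff k (eC 1) n) • iteratedDeriv n g t) := by
  refine ExpandO.sum (Finset.range (p+1)) fun k hk => ?_
  have hk' : k ≤ p := by have := Finset.mem_range.mp hk; omega
  have hgk : ContDiff ℝ ((p - k) + 1 : ℕ) (iteratedDeriv k g) := by
    refine contDiff_iteratedDeriv ?_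
    rw [show (p - k + 1) + k = p + 1 by omega]
    exact_mod_cast hg
  have hbase := taylor_expandO (p-k) (iteratedDeriv k g) hgk t
  have hsh := hbase.shift k
  rw [Nat.sub_add_cancel hk'] at hsh
  refine (hsh.const_smul (qrow k)).congr (fun z => rfl) (fun n _ => ?_)
  rcases lt_or_ge n k with hn | hn
  · simp [shiftCoeff, hn]
  · have hnk : ¬ n < k := not_lt.mpr hn
    simp only [shiftCoeff, if_neg hnk]
    rw [iteratedDeriv_iteratedDeriv, Nat.sub_add_cancel hn, smul_smul]
    simp [eC]


set_option maxHeartbeats 2000000 in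
/-- Order conditions theorem for internally consistent partitioned GLMs:
if each component method `(A_m, U_m, B_m, V_m)` (sharing the same abscissae
`c`) has order `p` and stage order `q ∈ {p-1, p}` (expressed via the
exponential order conditions), each `f_m` is Lipschitz, and the inputs carry
the correct derivative information up to `O(h^{p+1})`, then the internal
stages are accurate to `O(h^{q+1})` and the outputs to `O(h^{p+1})`;
no coupling order conditions between the component methods are required. -/
theorem stmt4
    (N s r p q : ℕ) (hq : q = p ∨ q + 1 = p) (hp : 0 < p)
    (d : Fin N → ℕ)
    (f : (m : Fin N) → ((m' : Fin N) → EuclideanSpace ℝ (Fin (d m'))) →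
      EuclideanSpace ℝ (Fin (d m)))
    (L : Fin N → NNReal) (hf : ∀ m, LipschitzWith (L m) (f m))
    (A : Fin N → Matrix (Fin s) (Fin s) ℝ) (U : Fin N → Matrix (Fin s) (Fin r) ℝ)
    (B : Fin N → Matrix (Fin r) (Fin s) ℝ) (V : Fin N → Matrix (Fin r) (Fin r) ℝ)
    (c : Fin s → ℝ) (qw : Fin N → ℕ → Fin r → ℝ)
    -- each component method has stage order `q` …
    (hstageOrder : ∀ m,
      (fun z : ℝ =>
          (fun i => Real.exp (c i * z)) -
            (z • (A m).mulVec (fun i => Real.exp (c i * z)) +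
              (U m).mulVec (∑ j ∈ Finset.range (p + 1), z ^ j • qw m j)))
        =O[𝓝 0] fun z : ℝ => z ^ (q + 1))
    -- … and order `p`
    (horder : ∀ m,
      (fun z : ℝ =>
          Real.exp z • (∑ j ∈ Finset.range (p + 1), z ^ j • qw m j) -
            (z • (B m).mulVec (fun i => Real.exp (c i * z)) +
              (V m).mulVec (∑ j ∈ Finset.range (p + 1), z ^ j • qw m j)))
        =O[𝓝 0] fun z : ℝ => z ^ (p + 1))
    -- the exact solution of the partitioned system `y' = f(y)`
    (y : ℝ → (m : Fin N) → EuclideanSpace ℝ (Fin (d m)))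
    (hy : ∀ t m, HasDerivAt (fun t' => y t' m) (f m (y t)) t)
    (hysmooth : ∀ m, ContDiff ℝ (p + 1) fun t => y t m)
    (t : ℝ)
    -- one step of the partitioned GLM, from `t` with step size `h`
    (Y : ℝ → Fin s → (m : Fin N) → EuclideanSpace ℝ (Fin (d m)))
    (yin yout : ℝ → Fin r → (m : Fin N) → EuclideanSpace ℝ (Fin (d m)))
    (hin : ∀ m i,
      (fun h : ℝ => yin h i m -
          ∑ k ∈ Finset.range (p + 1),
            (qw m k i * h ^ k) • iteratedDeriv k (fun t' => y t' m) t)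
        =O[𝓝 0] fun h : ℝ => h ^ (p + 1))
    (hstageEq : ∀ᶠ h : ℝ in 𝓝 0, ∀ m i,
      Y h i m = (∑ j, (h * A m i j) • f m (Y h j)) + ∑ j, U m i j • yin h j m)
    (houtEq : ∀ (h : ℝ) (m : Fin N) (i : Fin r),
      yout h i m = (∑ j, (h * B m i j) • f m (Y h j)) + ∑ j, V m i j • yin h j m) :
    (∀ m i, (fun h : ℝ => Y h i m - y (t + c i * h) m) =O[𝓝 0] fun h : ℝ => h ^ (q + 1)) ∧
    (∀ m i,
      (fun h : ℝ => yout h i m -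
          ∑ k ∈ Finset.range (p + 1),
            (qw m k i * h ^ k) • iteratedDeriv k (fun t' => y t' m) (t + h))
        =O[𝓝 0] fun h : ℝ => h ^ (p + 1)) := by
  have hqp : q ≤ p := by rcases hq with h | h <;> omega
  -- smoothness of components and their derivatives
  have hysm : ∀ m, ContDiff ℝ ((p + 1 : ℕ) : WithTop ℕ∞) (fun t' => y t' m) := by
    intro m; exact_mod_cast hysmooth m
  have hg' : ∀ m, ContDiff ℝ ((p : ℕ) : WithTop ℕ∞) (deriv (fun t' => y t' m)) := by
    intro m
    have h2 : ContDiff ℝ (((p : ℕ) : WithTop ℕ∞) + 1) (fun t' => y t' m) := by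
      exact_mod_cast hysmooth m
    exact (contDiff_succ_iff_deriv.mp h2).2.2
  have hgder : ∀ m s', deriv (fun t' => y t' m) s' = f m (y s') := fun m s' => (hy s' m).deriv
  -- expansion of the inputs, in canonical form
  have hinE : ∀ m j, ExpandO p (fun h : ℝ => yin h j m)
      (fun k => qw m k j • iteratedDeriv k (fun t' => y t' m) t) := by
    intro m j
    unfold ExpandO
    refine (hin m j).congr (fun h => ?_) (fun h => rfl)
    congr 1
    exact Finset.sum_congr rfl fun k _ => by rw [smul_smul, mul_comm]
  -- stage defect
  have hdefect : ∀ m i, (fun h : ℝ => y (t + c i * h) m -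
      ((∑ j, A m i j • (h • deriv (fun t' => y t' m) (t + c j * h))) +
        ∑ j, U m i j • yin h j m)) =O[𝓝 (0:ℝ)] fun h => h ^ (q + 1) := by
    intro m i
    set a : ℕ → ℝ := fun n => eC (c i) n -
      ((∑ j, A m i j * shiftCoeff 1 (eC (c j)) n) + ∑ j, U m i j * qw m n j) with ha
    -- scalar expansion of the order-condition function
    have h1 : ExpandO p (fun z : ℝ => Real.exp (c i * z) -
        ((z * ∑ j, A m i j * Real.exp (c j * z)) +
          ∑ j, U m i j * ∑ k ∈ Finset.range (p + 1), z ^ k * qw m k j)) a := by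
      have b1 := exp_expandO p (c i)
      have b2 := scalar_mulexp_expandO p hp (fun j => A m i j) c
      have b3 : ExpandO p (fun z : ℝ => ∑ j, U m i j *
          ∑ k ∈ Finset.range (p + 1), z ^ k * qw m k j) (fun n => ∑ j, U m i j * qw m n j) := by
        refine ExpandO.sum Finset.univ fun j _ => ?_
        have hpoly : ExpandO p (fun z : ℝ => ∑ k ∈ Finset.range (p + 1), z ^ k * qw m k j)
            (fun k => qw m k j) :=
          (ExpandO.poly (fun k => qw m k j)).congr
            (fun z => Finset.sum_congr rfl fun k _ => by rw [smul_eq_mul]) (fun k _ => rfl)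
        exact (hpoly.const_smul (U m i j)).congr (fun z => by rw [smul_eq_mul])
          (fun k _ => by rw [smul_eq_mul])
      exact (b1.sub (b2.add b3)).congr (fun z => rfl) (fun k _ => rfl)
    -- the order condition itself
    have h2 : (fun z : ℝ => Real.exp (c i * z) -
        ((z * ∑ j, A m i j * Real.exp (c j * z)) +
          ∑ j, U m i j * ∑ k ∈ Finset.range (p + 1), z ^ k * qw m k j))
        =O[𝓝 (0:ℝ)] fun z => z ^ (q + 1) := by
      refine (isBigO_apply (hstageOrder m) i).congr (fun z => ?_) (fun z => rfl)
      simp [Matrix.mulVec, dotProduct, Finset.sum_apply, Finset.mul_sum]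
    -- vector expansion
    have h3 : ExpandO p (fun h : ℝ => y (t + c i * h) m -
        ((∑ j, A m i j • (h • deriv (fun t' => y t' m) (t + c j * h))) +
          ∑ j, U m i j • yin h j m))
        (fun k => a k • iteratedDeriv k (fun t' => y t' m) t) := by
      have b1 : ExpandO p (fun h : ℝ => y (t + c i * h) m)
          (fun k => eC (c i) k • iteratedDeriv k (fun t' => y t' m) t) := by
        have := taylor_expandO_scaled p (fun t' => y t' m) (by exact_mod_cast hysmooth m) t (c i)
        exact this.congr (fun x => rfl) (fun k _ => rfl)
      have b2 := vec_mulderiv_expandO p hp (fun j => A m i j) c (fun t' => y t' m) (hg' m) t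
      have b3 : ExpandO p (fun h : ℝ => ∑ j, U m i j • yin h j m)
          (fun n => ∑ j, (U m i j * qw m n j) • iteratedDeriv n (fun t' => y t' m) t) := by
        refine ExpandO.sum Finset.univ fun j _ => ?_
        exact ((hinE m j).const_smul (U m i j)).congr (fun x => rfl)
          (fun k _ => by rw [smul_smul])
      refine (b1.sub (b2.add b3)).congr (fun x => rfl) (fun k _ => ?_)
      rw [ha]
      rw [sub_smul, add_smul, Finset.sum_smul, Finset.sum_smul]
    exact ExpandO.transfer (by omega) a _ h1 h2 h3
  -- rewrite the A-part of the defect in terms of f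
  have hAf : ∀ m (i : Fin s) (h : ℝ),
      (∑ j, A m i j • (h • deriv (fun t' => y t' m) (t + c j * h)))
        = ∑ j, (h * A m i j) • f m (y (t + c j * h)) := by
    intro m i h
    refine Finset.sum_congr rfl fun j _ => ?_
    rw [hgder m, smul_smul, mul_comm]
  -- uniform defect bound
  choose Cd hCd using fun mi : Fin N × Fin s => ((hdefect mi.1 mi.2).bound)
  set C1 : ℝ := ∑ mi : Fin N × Fin s, |Cd mi| with hC1
  have hC1n : 0 ≤ C1 := Finset.sum_nonneg fun _ _ => abs_nonneg _
  have hCd' : ∀ᶠ h : ℝ in 𝓝 0, ∀ mi : Fin N × Fin s,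
      ‖y (t + c mi.2 * h) mi.1 -
        ((∑ j, A mi.1 mi.2 j • (h • deriv (fun t' => y t' mi.1) (t + c j * h))) +
          ∑ j, U mi.1 mi.2 j • yin h j mi.1)‖ ≤ C1 * |h| ^ (q+1) := by
    refine eventually_all.mpr fun mi => ?_
    refine (hCd mi).mono fun h hb => ?_
    refine hb.trans ?_
    rw [Real.norm_eq_abs, abs_pow]
    refine mul_le_mul_of_nonneg_right ?_ (by positivity)
    calc Cd mi ≤ |Cd mi| := le_abs_self _
      _ ≤ C1 := Finset.single_le_sum (f := fun mi => |Cd mi|)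
          (fun _ _ => abs_nonneg _) (Finset.mem_univ mi)
  set Lam : ℝ := ∑ mi : Fin N × Fin s, (L mi.1 : ℝ) * ∑ j, |A mi.1 mi.2 j| with hLam
  have hLamn : 0 ≤ Lam :=
    Finset.sum_nonneg fun mi _ => mul_nonneg (L mi.1).coe_nonneg
      (Finset.sum_nonneg fun _ _ => abs_nonneg _)
  have hsmall : ∀ᶠ h : ℝ in 𝓝 0, |h| * Lam ≤ 1/2 := by
    refine Metric.eventually_nhds_iff.mpr ⟨1/(2*(Lam+1)), by positivity, fun h hh => ?_⟩
    have h1 : |h| < 1/(2*(Lam+1)) := by simpa [Real.dist_eq] using hh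
    have e1 : |h| * (Lam+1) ≤ (1/(2*(Lam+1))) * (Lam+1) :=
      mul_le_mul_of_nonneg_right h1.le (by positivity)
    have e2 : (1/(2*(Lam+1))) * (Lam+1) = 1/2 := by field_simp
    nlinarith [abs_nonneg h]
  -- the key eventual bound on the stage errors
  have hkey : ∀ᶠ h : ℝ in 𝓝 0, ∀ m i,
      ‖Y h i m - y (t + c i * h) m‖ ≤ (2 * ((N*s : ℕ) * C1)) * |h|^(q+1) := by
    filter_upwards [hstageEq, hCd', hsmall] with h hEq hDb hSm
    set M : ℝ := ∑ mi : Fin N × Fin s, ‖Y h mi.2 mi.1 - y (t + c mi.2 * h) mi.1‖ with hM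
    have hMn : 0 ≤ M := Finset.sum_nonneg fun _ _ => norm_nonneg _
    have herr : ∀ m i, Y h i m - y (t + c i * h) m =
        (∑ j, (h * A m i j) • (f m (Y h j) - f m (y (t + c j * h)))) -
        (y (t + c i * h) m -
          ((∑ j, A m i j • (h • deriv (fun t' => y t' m) (t + c j * h))) +
            ∑ j, U m i j • yin h j m)) := by
      intro m i
      rw [hEq m i, hAf m i h]
      simp only [smul_sub, Finset.sum_sub_distrib]
      abel
    have hfd : ∀ m (j : Fin s), ‖f m (Y h j) - f m (y (t + c j * h))‖ ≤ (L m : ℝ) * M := by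
      intro m j
      have h0 := (hf m).dist_le_mul (Y h j) (y (t + c j * h))
      rw [dist_eq_norm, dist_eq_norm] at h0
      refine h0.trans (mul_le_mul_of_nonneg_left ?_ (L m).coe_nonneg)
      have hsum : ∀ m', ‖Y h j m' - y (t + c j * h) m'‖ ≤ M :=
        fun m' => Finset.single_le_sum
          (f := fun mi : Fin N × Fin s => ‖Y h mi.2 mi.1 - y (t + c mi.2 * h) mi.1‖)
          (fun _ _ => norm_nonneg _) (Finset.mem_univ (m', j))
      refine (pi_norm_le_iff_of_nonneg hMn).mpr fun m' => ?_
      simpa using hsum m'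
    have hper : ∀ m i, ‖Y h i m - y (t + c i * h) m‖ ≤
        |h| * ((L m : ℝ) * ∑ j, |A m i j|) * M + C1 * |h|^(q+1) := by
      intro m i
      rw [herr m i]
      refine (norm_sub_le _ _).trans ?_
      have t1 : ‖∑ j, (h * A m i j) • (f m (Y h j) - f m (y (t + c j * h)))‖ ≤
          |h| * ((L m : ℝ) * ∑ j, |A m i j|) * M := by
        refine (norm_sum_le _ _).trans ?_
        have hb : ∀ j ∈ Finset.univ, ‖(h * A m i j) • (f m (Y h j) - f m (y (t + c j * h)))‖ ≤
            (|h| * |A m i j|) * ((L m : ℝ) * M) := by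
          intro j _
          rw [norm_smul, Real.norm_eq_abs, abs_mul]
          exact mul_le_mul_of_nonneg_left (hfd m j) (by positivity)
        refine (Finset.sum_le_sum hb).trans (le_of_eq ?_)
        rw [← Finset.sum_mul, ← Finset.mul_sum]
        ring
      have t2 := hDb (m, i)
      exact add_le_add t1 t2
    have hMsum : M ≤ |h| * Lam * M + (N*s : ℕ) * (C1 * |h|^(q+1)) := by
      calc M ≤ ∑ mi : Fin N × Fin s,
            (|h| * ((L mi.1 : ℝ) * ∑ j, |A mi.1 mi.2 j|) * M + C1 * |h|^(q+1)) :=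
          Finset.sum_le_sum fun mi _ => hper mi.1 mi.2
        _ = |h| * Lam * M + (N*s : ℕ) * (C1 * |h|^(q+1)) := by
            rw [Finset.sum_add_distrib, Finset.sum_const, Finset.card_univ]
            congr 1
            · rw [← Finset.sum_mul, ← Finset.mul_sum, ← hLam]
            · simp [mul_comm]
    intro m i
    have hhalf : |h| * Lam * M ≤ (1/2) * M := mul_le_mul_of_nonneg_right hSm hMn
    have hfin : M ≤ 2 * ((N*s:ℕ) * C1) * |h|^(q+1) := by nlinarith
    calc ‖Y h i m - y (t + c i * h) m‖ ≤ M :=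
        Finset.single_le_sum
          (f := fun mi : Fin N × Fin s => ‖Y h mi.2 mi.1 - y (t + c mi.2 * h) mi.1‖)
          (fun _ _ => norm_nonneg _) (Finset.mem_univ (m, i))
      _ ≤ _ := hfin
  have hstage : ∀ m i, (fun h : ℝ => Y h i m - y (t + c i * h) m)
      =O[𝓝 (0:ℝ)] fun h : ℝ => h ^ (q + 1) := by
    intro m i
    rw [isBigO_iff]
    refine ⟨2 * ((N*s:ℕ) * C1), hkey.mono fun h hh => ?_⟩
    rw [Real.norm_eq_abs (h^(q+1)), abs_pow]
    exact hh m i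
  refine ⟨hstage, ?_⟩
  intro m i
  -- output defect
  have hdef2 : (fun h : ℝ =>
      (∑ k ∈ Finset.range (p+1), qw m k i • (h ^ k • iteratedDeriv k (fun t' => y t' m) (t+h))) -
        ((∑ j, B m i j • (h • deriv (fun t' => y t' m) (t + c j * h))) +
          ∑ j, V m i j • yin h j m)) =O[𝓝 (0:ℝ)] fun h => h ^ (p+1) := by
    set a2 : ℕ → ℝ := fun n => (∑ k ∈ Finset.range (p+1), qw m k i * shiftCoeff k (eC 1) n) -
      ((∑ j, B m i j * shiftCoeff 1 (eC (c j)) n) + ∑ j, V m i j * qw m n j) with ha2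
    have h1 : ExpandO p (fun z : ℝ =>
        (∑ k ∈ Finset.range (p+1), qw m k i • (z ^ k • Real.exp z)) -
          ((z * ∑ j, B m i j * Real.exp (c j * z)) +
            ∑ j, V m i j * ∑ k ∈ Finset.range (p+1), z ^ k * qw m k j)) a2 := by
      have b1 := scalar_exppoly_expandO p (fun k => qw m k i)
      have b2 := scalar_mulexp_expandO p hp (fun j => B m i j) c
      have b3 : ExpandO p (fun z : ℝ => ∑ j, V m i j *
          ∑ k ∈ Finset.range (p + 1), z ^ k * qw m k j) (fun n => ∑ j, V m i j * qw m n j) := by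
        refine ExpandO.sum Finset.univ fun j _ => ?_
        have hpoly : ExpandO p (fun z : ℝ => ∑ k ∈ Finset.range (p + 1), z ^ k * qw m k j)
            (fun k => qw m k j) :=
          (ExpandO.poly (fun k => qw m k j)).congr
            (fun z => Finset.sum_congr rfl fun k _ => by rw [smul_eq_mul]) (fun k _ => rfl)
        exact (hpoly.const_smul (V m i j)).congr (fun z => by rw [smul_eq_mul])
          (fun k _ => by rw [smul_eq_mul])
      exact (b1.sub (b2.add b3)).congr (fun z => rfl) (fun k _ => rfl)
    have h2 : (fun z : ℝ =>
        (∑ k ∈ Finset.range (p+1), qw m k i • (z ^ k • Real.exp z)) -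
          ((z * ∑ j, B m i j * Real.exp (c j * z)) +
            ∑ j, V m i j * ∑ k ∈ Finset.range (p+1), z ^ k * qw m k j))
        =O[𝓝 (0:ℝ)] fun z => z ^ (p + 1) := by
      refine (isBigO_apply (horder m) i).congr (fun z => ?_) (fun z => rfl)
      simp only [Pi.sub_apply, Pi.add_apply, Pi.smul_apply, Finset.sum_apply,
        Matrix.mulVec, dotProduct, smul_eq_mul]
      congr 1
      rw [Finset.mul_sum]
      exact Finset.sum_congr rfl fun k _ => by ring
    have h3 : ExpandO p (fun h : ℝ =>
        (∑ k ∈ Finset.range (p+1), qw m k i • (h ^ k • iteratedDeriv k (fun t' => y t' m) (t+h))) -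
          ((∑ j, B m i j • (h • deriv (fun t' => y t' m) (t + c j * h))) +
            ∑ j, V m i j • yin h j m))
        (fun k => a2 k • iteratedDeriv k (fun t' => y t' m) t) := by
      have b1 := vec_target_expandO p (fun k => qw m k i) (fun t' => y t' m) (hysm m) t
      have b2 := vec_mulderiv_expandO p hp (fun j => B m i j) c (fun t' => y t' m) (hg' m) t
      have b3 : ExpandO p (fun h : ℝ => ∑ j, V m i j • yin h j m)
          (fun n => ∑ j, (V m i j * qw m n j) • iteratedDeriv n (fun t' => y t' m) t) := by
        refine ExpandO.sum Finset.univ fun j _ => ?_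
        exact ((hinE m j).const_smul (V m i j)).congr (fun x => rfl)
          (fun k _ => by rw [smul_smul])
      refine (b1.sub (b2.add b3)).congr (fun x => rfl) (fun k _ => ?_)
      rw [ha2, sub_smul, add_smul, Finset.sum_smul, Finset.sum_smul, Finset.sum_smul]
    exact ExpandO.transfer (le_refl (p+1)) a2 _ h1 h2 h3
  -- the remaining difference term
  have hdiff : (fun h : ℝ => ∑ j, (h * B m i j) • (f m (Y h j) - f m (y (t + c j * h))))
      =O[𝓝 (0:ℝ)] fun h => h ^ (p+1) := by
    have hppq : p + 1 ≤ q + 2 := by omega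
    refine IsBigO.fun_sum fun j _ => ?_
    have hdj : (fun h : ℝ => f m (Y h j) - f m (y (t + c j * h)))
        =O[𝓝 (0:ℝ)] fun h => h ^ (q+1) := by
      have hsumO : (fun h : ℝ => ∑ m' : Fin N, ‖Y h j m' - y (t + c j * h) m'‖)
          =O[𝓝 (0:ℝ)] fun h => h ^ (q+1) :=
        IsBigO.fun_sum fun m' _ => (hstage m' j).norm_left
      refine IsBigO.trans ?_ hsumO
      rw [isBigO_iff]
      refine ⟨(L m : ℝ), Filter.Eventually.of_forall fun h => ?_⟩
      have h0 := (hf m).dist_le_mul (Y h j) (y (t + c j * h))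
      rw [dist_eq_norm, dist_eq_norm] at h0
      refine h0.trans ?_
      have hnn : (0:ℝ) ≤ ∑ m' : Fin N, ‖Y h j m' - y (t + c j * h) m'‖ :=
        Finset.sum_nonneg fun _ _ => norm_nonneg _
      rw [Real.norm_eq_abs, abs_of_nonneg hnn]
      refine mul_le_mul_of_nonneg_left ?_ (L m).coe_nonneg
      refine (pi_norm_le_iff_of_nonneg hnn).mpr fun m' => ?_
      simpa using Finset.single_le_sum
        (f := fun m' : Fin N => ‖Y h j m' - y (t + c j * h) m'‖)
        (fun _ _ => norm_nonneg _) (Finset.mem_univ m')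
    have hb : (fun h : ℝ => h * B m i j) =O[𝓝 (0:ℝ)] fun h : ℝ => h := by
      rw [isBigO_iff]
      exact ⟨|B m i j|, Filter.Eventually.of_forall fun h => by
        rw [Real.norm_eq_abs, Real.norm_eq_abs, abs_mul]
        exact le_of_eq (mul_comm _ _)⟩
    have hsm := hb.smul hdj
    refine (hsm.congr (fun h => rfl) (fun h => ?_)).trans (pow_isBigO_pow_nhds_zero hppq)
    show h • h ^ (q+1) = h ^ (q+2)
    rw [smul_eq_mul, ← pow_succ']
  -- assemble
  have hfinal : ∀ h : ℝ, yout h i m -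
      ∑ k ∈ Finset.range (p+1), (qw m k i * h ^ k) • iteratedDeriv k (fun t' => y t' m) (t + h)
      = (∑ j, (h * B m i j) • (f m (Y h j) - f m (y (t + c j * h)))) -
        ((∑ k ∈ Finset.range (p+1),
            qw m k i • (h ^ k • iteratedDeriv k (fun t' => y t' m) (t+h))) -
          ((∑ j, B m i j • (h • deriv (fun t' => y t' m) (t + c j * h))) +
            ∑ j, V m i j • yin h j m)) := by
    intro h
    rw [houtEq h m i]
    have hBf : (∑ j, B m i j • (h • deriv (fun t' => y t' m) (t + c j * h)))
        = ∑ j, (h * B m i j) • f m (y (t + c j * h)) :=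
      Finset.sum_congr rfl fun j _ => by rw [hgder m, smul_smul, mul_comm]
    have htar : (∑ k ∈ Finset.range (p+1),
          (qw m k i * h ^ k) • iteratedDeriv k (fun t' => y t' m) (t+h))
        = ∑ k ∈ Finset.range (p+1),
            qw m k i • (h ^ k • iteratedDeriv k (fun t' => y t' m) (t+h)) :=
      Finset.sum_congr rfl fun k _ => by rw [smul_smul]
    rw [hBf, htar]
    simp only [smul_sub, Finset.sum_sub_distrib]
    abel
  exact (hdiff.sub hdef2).congr (fun h => (hfinal h).symm) (fun h => rfl)
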